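/- (Willard) Suppose f : A^n → B depends on all of its n variables, where A is finite with |A| = k elements and n > k. Then the arity gap of f is at most 2. -/
import Mathlib


/-- Variable `i` is essential in `f`. -/
def EssAt {A B : Type*} {n : ℕ} (f : (Fin n → A) → B) (i : Fin n) : Prop :=
  ∃ a b : Fin n → A, (∀ j, j ≠ i → a j = b j) ∧ f a ≠ f b

/-- The essential arity of `f`: the number of essential variables. -/
noncomputable def essArity {A B : Type*} {n : ℕ} (f : (Fin n → A) → B) : ℕ :=
  Set.ncard {i : Fin n | EssAt f i}

/-- `A^n_=`: tuples with at least two equal coordinates (all of `A` when `n = 1`). -/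
def Aneq (A : Type*) (n : ℕ) : Set (Fin n → A) :=
  {a | n = 1 ∨ ∃ i j : Fin n, i ≠ j ∧ a i = a j}

/-- Variable `i` is essential in the restriction of `f` to `S` (witnesses must lie in `S`). -/
def EssAtOn {A B : Type*} {n : ℕ} (f : (Fin n → A) → B) (S : Set (Fin n → A)) (i : Fin n) : Prop :=
  ∃ a b : Fin n → A, a ∈ S ∧ b ∈ S ∧ (∀ j, j ≠ i → a j = b j) ∧ f a ≠ f b

/-- Essential arity of the restriction of `f` to `S`. -/
noncomputable def essArityOn {A B : Type*} {n : ℕ} (f : (Fin n → A) → B)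
    (S : Set (Fin n → A)) : ℕ :=
  Set.ncard {i : Fin n | EssAtOn f S i}

/-- `g` is a support of `f`: they agree on `A^n_=`. -/
def IsSupport {A B : Type*} {n : ℕ} (f g : (Fin n → A) → B) : Prop :=
  ∀ a ∈ Aneq A n, g a = f a

/-- The quasi-arity of `f`: minimum essential arity of a support of `f`. -/
noncomputable def qarity {A B : Type*} {n : ℕ} (f : (Fin n → A) → B) : ℕ :=
  sInf {m | ∃ g : (Fin n → A) → B, IsSupport f g ∧ essArity g = m}

/-- The variable identification minor `f_{i ← j}`: substitute `x_j` for `x_i`. -/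
def idMinor {A B : Type*} {n : ℕ} (f : (Fin n → A) → B) (i j : Fin n) :
    (Fin n → A) → B :=
  fun a => f (Function.update a i (a j))

/-- The arity gap of `f`: minimum of `ess f - ess f_{i←j}` over pairs of distinct
essential variables. -/
noncomputable def arityGap {A B : Type*} {n : ℕ} (f : (Fin n → A) → B) : ℕ :=
  sInf {d | ∃ i j : Fin n, i ≠ j ∧ EssAt f i ∧ EssAt f j ∧
    d = essArity f - essArity (idMinor f i j)}

namespace WillardAux

variable {A B : Type*} {n : ℕ}

/-- The slice `x_i = x_j`. -/
def Dsl {A : Type*} {n : ℕ} (i j : Fin n) : Set (Fin n → A) := {a | a i = a j}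

lemma mem_Dsl {i j : Fin n} {a : Fin n → A} : a ∈ (Dsl i j : Set (Fin n → A)) ↔ a i = a j :=
  Iff.rfl

/-- Essential variables of `f` on the slice `x_i = x_j`. -/
def ES (f : (Fin n → A) → B) (i j : Fin n) : Set (Fin n) :=
  {ℓ | EssAtOn f (Dsl i j) ℓ}

/-- Diagonal dependence of `f` on the pair `(i,j)`. -/
def Dg (f : (Fin n → A) → B) (i j : Fin n) : Prop :=
  ∃ a : Fin n → A, ∃ s t : A,
    f (Function.update (Function.update a i s) j s) ≠
      f (Function.update (Function.update a i t) j t)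

lemma Dsl_symm (i j : Fin n) : (Dsl i j : Set (Fin n → A)) = Dsl j i := by
  ext a; exact eq_comm

lemma ES_symm (f : (Fin n → A) → B) (i j : Fin n) : ES f i j = ES f j i := by
  unfold ES; rw [Dsl_symm]

lemma notMem_ES_left {f : (Fin n → A) → B} {i j : Fin n} (hij : i ≠ j) : i ∉ ES f i j := by
  rintro ⟨a, b, ha, hb, hag, hne⟩
  apply hne
  apply congrArg
  funext r
  by_cases hr : r = i
  · subst hr
    calc a r = a j := ha
    _ = b j := hag j (Ne.symm hij)
    _ = b r := hb.symm
  · exact hag r hr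

lemma notMem_ES_right {f : (Fin n → A) → B} {i j : Fin n} (hij : i ≠ j) : j ∉ ES f i j := by
  rw [ES_symm]; exact notMem_ES_left (Ne.symm hij)

lemma update_self_of_mem_Dsl {a : Fin n → A} {i j : Fin n}
    (ha : a ∈ (Dsl i j : Set (Fin n → A))) :
    Function.update a i (a j) = a := by
  funext r
  rcases eq_or_ne r i with rfl | hr
  · rw [Function.update_self]; exact ha.symm
  · rw [Function.update_of_ne hr]

lemma ES_subset_minor (f : (Fin n → A) → B) {i j : Fin n} :
    ES f i j ⊆ {ℓ | EssAt (idMinor f i j) ℓ} := by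
  rintro ℓ ⟨a, b, ha, hb, hag, hne⟩
  refine ⟨a, b, hag, ?_⟩
  show f (Function.update a i (a j)) ≠ f (Function.update b i (b j))
  rw [update_self_of_mem_Dsl ha, update_self_of_mem_Dsl hb]
  exact hne

lemma Dg_minor (f : (Fin n → A) → B) {i j : Fin n} (hij : i ≠ j) (h : Dg f i j) :
    EssAt (idMinor f i j) j := by
  obtain ⟨a, s, t, hne⟩ := h
  set u : Fin n → A := Function.update (Function.update a i s) j s with hu
  refine ⟨u, Function.update u j t, fun r hr => (Function.update_of_ne hr _ _).symm, ?_⟩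
  have e1 : Function.update u i (u j) = u := by
    have huj : u j = s := Function.update_self _ _ _
    rw [huj]
    funext r
    rcases eq_or_ne r i with rfl | hr
    · rw [Function.update_self, hu, Function.update_of_ne hij, Function.update_self]
    · rw [Function.update_of_ne hr]
  have e2 : Function.update (Function.update u j t) i ((Function.update u j t) j) =
      Function.update (Function.update a i t) j t := by
    rw [Function.update_self]
    funext r
    rcases eq_or_ne r j with rfl | hrj
    · rw [Function.update_of_ne (Ne.symm hij), Function.update_self, Function.update_self]
    · rcases eq_or_ne r i with rfl | hri
      · rw [Function.update_self, Function.update_of_ne hrj, Function.update_self]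
      · rw [Function.update_of_ne hri, Function.update_of_ne hrj, Function.update_of_ne hrj,
          Function.update_of_ne hri, hu, Function.update_of_ne hrj, Function.update_of_ne hri]
  show f (Function.update u i (u j)) ≠ f _
  rw [e1, e2]
  exact hne


lemma stepwise (f : (Fin n → A) → B) {i j : Fin n} (hij : i ≠ j) :
    ∀ s : Finset (Fin n), (∀ r ∈ s, r ∉ ES f i j ∧ r ≠ i ∧ r ≠ j) →
    ∀ a b : Fin n → A, a ∈ (Dsl i j : Set (Fin n → A)) → b ∈ (Dsl i j : Set (Fin n → A)) →
      (∀ r, r ∉ s → a r = b r) → f a = f b := by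
  classical
  intro s
  induction s using Finset.induction_on with
  | empty =>
      intro _ a b _ _ h
      exact congrArg f (funext fun r => h r (Finset.notMem_empty r))
  | @insert r₀ s hr₀ ih =>
      intro hs a b ha hb hagree
      obtain ⟨hrE, hri, hrj⟩ := hs r₀ (Finset.mem_insert_self r₀ s)
      set c : Fin n → A := Function.update a r₀ (b r₀) with hc
      have hcD : c ∈ (Dsl i j : Set (Fin n → A)) := by
        show c i = c j
        rw [hc, Function.update_of_ne (Ne.symm hri), Function.update_of_ne (Ne.symm hrj)]
        exact ha
      have h1 : f a = f c := by
        by_contra hfa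
        exact hrE ⟨a, c, ha, hcD, fun r hr => (Function.update_of_ne hr _ _).symm, hfa⟩
      have h2 : f c = f b := by
        apply ih (fun r hr => hs r (Finset.mem_insert_of_mem hr)) c b hcD hb
        intro r hr
        rcases eq_or_ne r r₀ with rfl | hne
        · rw [hc]; exact Function.update_self r (b r) a
        · rw [hc, Function.update_of_ne hne]
          exact hagree r (by simp [Finset.mem_insert, hne, hr])
      exact h1.trans h2

/-- Determination lemma: on the slice `x_i = x_j`, `f` is determined by the coordinates in
`ES f i j` together with (in the presence of diagonal dependence) the common value. -/
lemma DL (f : (Fin n → A) → B) {i j : Fin n} (hij : i ≠ j) {a b : Fin n → A}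
    (ha : a ∈ (Dsl i j : Set (Fin n → A))) (hb : b ∈ (Dsl i j : Set (Fin n → A)))
    (hE : ∀ r ∈ ES f i j, a r = b r) (hd : a i = b i ∨ ¬ Dg f i j) : f a = f b := by
  classical
  set c : Fin n → A := fun r => if r = i ∨ r = j then a r else b r with hc
  have hci : c i = a i := by rw [hc]; simp
  have hcj : c j = a j := by rw [hc]; simp
  have hcr : ∀ r, r ≠ i → r ≠ j → c r = b r := by
    intro r h1 h2
    rw [hc]; simp [h1, h2]
  have hcD : c ∈ (Dsl i j : Set (Fin n → A)) := by
    show c i = c j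
    rw [hci, hcj]; exact ha
  have h1 : f a = f c := by
    apply stepwise f hij (Finset.univ.filter (fun r => ¬ (a r = c r))) ?_ a c ha hcD
    · intro r hr
      by_contra h
      exact hr (Finset.mem_filter.mpr ⟨Finset.mem_univ r, h⟩)
    · intro r hr
      obtain ⟨-, hne⟩ := Finset.mem_filter.mp hr
      have hri : r ≠ i := by rintro rfl; exact hne (by rw [hci])
      have hrj : r ≠ j := by rintro rfl; exact hne (by rw [hcj])
      refine ⟨?_, hri, hrj⟩
      intro hrE
      exact hne (by rw [hcr r hri hrj]; exact hE r hrE)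
  rcases hd with hd | hd
  · have hcb : c = b := by
      funext r
      rcases eq_or_ne r i with rfl | hri
      · rw [hci]; exact hd
      · rcases eq_or_ne r j with rfl | hrj
        · rw [hcj]
          calc a r = a i := ha.symm
          _ = b i := hd
          _ = b r := hb
        · exact hcr r hri hrj
    rw [h1, hcb]
  · by_contra hfb
    apply hd
    refine ⟨b, a i, b i, ?_⟩
    have e1 : Function.update (Function.update b i (a i)) j (a i) = c := by
      funext r
      rcases eq_or_ne r j with rfl | hrj
      · rw [Function.update_self, hcj]; exact ha
      · rw [Function.update_of_ne hrj]
        rcases eq_or_ne r i with rfl | hri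
        · rw [Function.update_self, hci]
        · rw [Function.update_of_ne hri, hcr r hri hrj]
    have e2 : Function.update (Function.update b i (b i)) j (b i) = b := by
      funext r
      rcases eq_or_ne r j with rfl | hrj
      · rw [Function.update_self]; exact hb
      · rw [Function.update_of_ne hrj]
        rcases eq_or_ne r i with rfl | hri
        · rw [Function.update_self]
        · rw [Function.update_of_ne hri]
    rw [e1, e2]
    exact fun hcb => hfb (h1.trans hcb)

/-- Star lemma: an essential variable on a slice can be moved to the slice `x_c = x_w`
provided `c` is a "spare" coordinate of the original slice. -/
lemma star (f : (Fin n → A) → B) {i j ℓ c w : Fin n} (hij : i ≠ j) (hℓ : ℓ ∈ ES f i j)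
    (hcE : c ∉ ES f i j) (hci : c ≠ i) (hcj : c ≠ j) (hwℓ : w ≠ ℓ) (hwc : w ≠ c) :
    ℓ ∈ ES f c w := by
  obtain ⟨a, b, ha, hb, hag, hne⟩ := hℓ
  have hcℓ : c ≠ ℓ := by
    rintro rfl
    exact hcE ⟨a, b, ha, hb, hag, hne⟩
  set a' : Fin n → A := Function.update a c (a w) with ha'
  set b' : Fin n → A := Function.update b c (b w) with hb'
  have key : ∀ (x : Fin n → A), (Function.update x c (x w)) ∈ (Dsl i j : Set (Fin n → A)) →
      True := fun _ _ => trivial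
  have haD : a' ∈ (Dsl i j : Set (Fin n → A)) := by
    show a' i = a' j
    rw [ha', Function.update_of_ne (Ne.symm hci), Function.update_of_ne (Ne.symm hcj)]
    exact ha
  have hbD : b' ∈ (Dsl i j : Set (Fin n → A)) := by
    show b' i = b' j
    rw [hb', Function.update_of_ne (Ne.symm hci), Function.update_of_ne (Ne.symm hcj)]
    exact hb
  have hfa : f a' = f a := by
    apply DL f hij haD ha
    · intro r hr
      rcases eq_or_ne r c with rfl | hrc
      · exact absurd hr hcE
      · rw [ha', Function.update_of_ne hrc]
    · left; rw [ha', Function.update_of_ne (Ne.symm hci)]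
  have hfb : f b' = f b := by
    apply DL f hij hbD hb
    · intro r hr
      rcases eq_or_ne r c with rfl | hrc
      · exact absurd hr hcE
      · rw [hb', Function.update_of_ne hrc]
    · left; rw [hb', Function.update_of_ne (Ne.symm hci)]
  refine ⟨a', b', ?_, ?_, ?_, ?_⟩
  · show a' c = a' w
    rw [ha', Function.update_self, Function.update_of_ne hwc]
  · show b' c = b' w
    rw [hb', Function.update_self, Function.update_of_ne hwc]
  · intro r hr
    rcases eq_or_ne r c with rfl | hrc
    · rw [ha', hb', Function.update_self, Function.update_self]
      exact hag w hwℓ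
    · rw [ha', hb', Function.update_of_ne hrc, Function.update_of_ne hrc]
      exact hag r hr
  · rw [hfa, hfb]; exact hne

lemma ncard_compl_add (s : Set (Fin n)) : s.ncard + sᶜ.ncard = n := by
  have := Set.ncard_add_ncard_compl s
  simpa using this

lemma pair_ncard_le (x y : Fin n) : ({x, y} : Set (Fin n)).ncard ≤ 2 := by
  apply le_trans (Set.ncard_insert_le x {y})
  simp [Set.ncard_singleton]

lemma ncard_le_n (s : Set (Fin n)) : s.ncard ≤ n := by
  have h := Set.ncard_le_ncard (Set.subset_univ s) (Set.toFinite _)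
  simpa [Set.ncard_univ] using h

/-- Master system lemma. -/
lemma master (f : (Fin n → A) → B) (v₀ : A) (hn : 3 ≤ n)
    (hstar : ∀ i j : Fin n, i ≠ j → (ES f i j).ncard ≤ n - 3)
    (hstarD : ∀ i j : Fin n, i ≠ j → Dg f i j → (ES f i j).ncard + 1 ≤ n - 3)
    (C₀ : Set (Fin n)) (x₁ y₁ : Fin n) (hxy₁ : x₁ ≠ y₁) (hC₀ : C₀ ⊆ ES f x₁ y₁) :
    ∃ W : Set (Fin n),
      C₀ ⊆ W ∧ W.ncard ≤ n - 3 ∧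
      (∀ x y : Fin n, x ≠ y → x ∉ W → y ∉ W → ES f x y = W) ∧
      (∀ a b : Fin n → A,
        (∃ x y, x ≠ y ∧ x ∉ W ∧ y ∉ W ∧ a x = a y) →
        (∃ x y, x ≠ y ∧ x ∉ W ∧ y ∉ W ∧ b x = b y) →
        (∀ r ∈ W, a r = b r) → f a = f b) ∧
      (∀ v c w' : Fin n, v ∈ W → c ∉ W → w' ∈ W → w' ≠ v → w' ∈ ES f v c) := by
  classical
  set Svals : Set ℕ :=
    {e : ℕ | ∃ x y : Fin n, (x ≠ y ∧ C₀ ⊆ ES f x y) ∧ (ES f x y).ncard = e} with hSvals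
  have hSne : Svals.Nonempty := ⟨_, x₁, y₁, ⟨hxy₁, hC₀⟩, rfl⟩
  have hSbd : BddAbove Svals := by
    refine ⟨n, ?_⟩
    rintro e ⟨x, y, -, rfl⟩
    exact ncard_le_n _
  obtain ⟨x₀, y₀, ⟨hx₀y₀, hC₀'⟩, hcard⟩ := Nat.sSup_mem hSne hSbd
  set W : Set (Fin n) := ES f x₀ y₀ with hWdef
  have hmax : ∀ x y : Fin n, x ≠ y → C₀ ⊆ ES f x y → (ES f x y).ncard ≤ W.ncard := by
    intro x y h1 h2
    have hm : (ES f x y).ncard ∈ Svals := ⟨x, y, ⟨h1, h2⟩, rfl⟩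
    have := le_csSup hSbd hm
    omega
  have hW3 : W.ncard ≤ n - 3 := hstar _ _ hx₀y₀
  have hC₀W : C₀ ⊆ W := hC₀'
  have hEQaux : ∀ x y : Fin n, x ≠ y → W ⊆ ES f x y → ES f x y = W := by
    intro x y h1 h2
    exact (Set.eq_of_subset_of_ncard_le h2 (hmax x y h1 (hC₀W.trans h2)) (Set.toFinite _)).symm
  have hx₀W : x₀ ∉ W := notMem_ES_left hx₀y₀
  have hy₀W : y₀ ∉ W := notMem_ES_right hx₀y₀
  obtain ⟨c₀, hc₀W, hc₀x, hc₀y⟩ : ∃ c₀, c₀ ∉ W ∧ c₀ ≠ x₀ ∧ c₀ ≠ y₀ := by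
    have h1 : (W ∪ {x₀, y₀}).ncard ≤ n - 1 := by
      have := Set.ncard_union_le W ({x₀, y₀} : Set (Fin n))
      have hp := pair_ncard_le x₀ y₀
      omega
    have h2 : ((W ∪ {x₀, y₀})ᶜ).ncard ≠ 0 := by
      have := ncard_compl_add (W ∪ {x₀, y₀})
      omega
    obtain ⟨c₀, hc₀⟩ := Set.nonempty_of_ncard_ne_zero h2
    simp only [Set.mem_compl_iff, Set.mem_union, Set.mem_insert_iff, Set.mem_singleton_iff,
      not_or] at hc₀
    exact ⟨c₀, hc₀.1, hc₀.2.1, hc₀.2.2⟩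
  have stepA : ∀ w : Fin n, w ∉ W → w ≠ c₀ → ES f c₀ w = W := by
    intro w hw hwc
    apply hEQaux c₀ w (Ne.symm hwc)
    intro ℓ hℓ
    exact star f hx₀y₀ hℓ hc₀W hc₀x hc₀y (fun h => hw (by rw [h]; exact hℓ)) hwc
  have hrig : ∀ x y : Fin n, x ≠ y → x ∉ W → y ∉ W → ES f x y = W := by
    intro x y hxy hxW hyW
    rcases eq_or_ne x c₀ with rfl | hxc
    · exact stepA y hyW (Ne.symm hxy)
    rcases eq_or_ne y c₀ with rfl | hyc
    · rw [ES_symm]; exact stepA x hxW hxc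
    · have h1 : ES f c₀ x = W := stepA x hxW hxc
      apply hEQaux x y hxy
      intro ℓ hℓ
      have hℓ1 : ℓ ∈ ES f c₀ x := by rw [h1]; exact hℓ
      have hyE : y ∉ ES f c₀ x := by rw [h1]; exact hyW
      have h2 : ℓ ∈ ES f y x :=
        star f (Ne.symm hxc) hℓ1 hyE hyc (Ne.symm hxy) (fun h => hxW (by rw [h]; exact hℓ)) hxy
      rw [ES_symm]; exact h2
  have hδ : ∀ x y : Fin n, x ≠ y → x ∉ W → y ∉ W → ¬ Dg f x y := by
    intro x y hxy hxW hyW hD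
    have hES : ES f x y = W := hrig x y hxy hxW hyW
    have h4 : W.ncard + 1 ≤ n - 3 := by rw [← hES]; exact hstarD x y hxy hD
    obtain ⟨z, w, hzm, hwm, hzw⟩ :
        ∃ z w, z ∈ (W ∪ {x, y} : Set (Fin n))ᶜ ∧ w ∈ (W ∪ {x, y} : Set (Fin n))ᶜ ∧ z ≠ w := by
      have h1 : (W ∪ {x, y}).ncard ≤ n - 2 := by
        have := Set.ncard_union_le W ({x, y} : Set (Fin n))
        have hp := pair_ncard_le x y
        omega
      have h2 : 1 < ((W ∪ {x, y})ᶜ).ncard := by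
        have := ncard_compl_add (W ∪ {x, y})
        omega
      exact (Set.one_lt_ncard_iff (Set.toFinite _)).mp h2
    simp only [Set.mem_compl_iff, Set.mem_union, Set.mem_insert_iff, Set.mem_singleton_iff,
      not_or] at hzm hwm
    obtain ⟨hzW, hzx, hzy⟩ := hzm
    obtain ⟨hwW, hwx, hwy⟩ := hwm
    obtain ⟨a₀, s, t, hne⟩ := hD
    set γ : A → A → (Fin n → A) := fun p q => fun r =>
      if r = x then p else if r = y then q else if r = z then s else if r = w then s else a₀ r
      with hγ
    have hγx : ∀ p q, γ p q x = p := by intro p q; simp [hγ]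
    have hγy : ∀ p q, γ p q y = q := by intro p q; simp [hγ, Ne.symm hxy]
    have hγz : ∀ p q, γ p q z = s := by intro p q; simp [hγ, hzx, hzy]
    have hγw : ∀ p q, γ p q w = s := by intro p q; simp [hγ, hwx, hwy, hzw.symm]
    have hγo : ∀ p q r, r ≠ x → r ≠ y → r ≠ z → r ≠ w → γ p q r = a₀ r := by
      intro p q r h1 h2 h3 h4; simp [hγ, h1, h2, h3, h4]
    set α : Fin n → A := Function.update (Function.update a₀ x s) y s with hα
    set β : Fin n → A := Function.update (Function.update a₀ x t) y t with hβ
    have hαx : α x = s := by rw [hα, Function.update_of_ne hxy, Function.update_self]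
    have hαy : α y = s := by rw [hα, Function.update_self]
    have hβx : β x = t := by rw [hβ, Function.update_of_ne hxy, Function.update_self]
    have hβy : β y = t := by rw [hβ, Function.update_self]
    have hαo : ∀ r, r ≠ x → r ≠ y → α r = a₀ r := by
      intro r h1 h2; rw [hα, Function.update_of_ne h2, Function.update_of_ne h1]
    have hβo : ∀ r, r ≠ x → r ≠ y → β r = a₀ r := by
      intro r h1 h2; rw [hβ, Function.update_of_ne h2, Function.update_of_ne h1]
    -- f (γ s s) = f α  and  f (γ t t) = f β
    have h5 : f (γ s s) = f α := by
      apply DL f hxy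
      · show γ s s x = γ s s y; rw [hγx, hγy]
      · show α x = α y; rw [hαx, hαy]
      · intro r hr
        rw [hES] at hr
        have hrx : r ≠ x := fun h => hxW (by rw [← h]; exact hr)
        have hry : r ≠ y := fun h => hyW (by rw [← h]; exact hr)
        have hrz : r ≠ z := fun h => hzW (by rw [← h]; exact hr)
        have hrw : r ≠ w := fun h => hwW (by rw [← h]; exact hr)
        rw [hγo s s r hrx hry hrz hrw, hαo r hrx hry]
      · left; rw [hγx, hαx]
    have h6 : f (γ t t) = f β := by
      apply DL f hxy
      · show γ t t x = γ t t y; rw [hγx, hγy]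
      · show β x = β y; rw [hβx, hβy]
      · intro r hr
        rw [hES] at hr
        have hrx : r ≠ x := fun h => hxW (by rw [← h]; exact hr)
        have hry : r ≠ y := fun h => hyW (by rw [← h]; exact hr)
        have hrz : r ≠ z := fun h => hzW (by rw [← h]; exact hr)
        have hrw : r ≠ w := fun h => hwW (by rw [← h]; exact hr)
        rw [hγo t t r hrx hry hrz hrw, hβo r hrx hry]
      · left; rw [hγx, hβx]
    have h7 : f (γ s s) ≠ f (γ t t) := by rw [h5, h6]; exact hne
    have hagree1 : ∀ r, r ≠ x → γ s s r = γ t s r := by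
      intro r hr; by_cases h1 : r = y
      · subst h1; rw [hγy, hγy]
      · by_cases h2 : r = z
        · subst h2; rw [hγz, hγz]
        · by_cases h3 : r = w
          · subst h3; rw [hγw, hγw]
          · rw [hγo _ _ r hr h1 h2 h3, hγo _ _ r hr h1 h2 h3]
    have hagree2 : ∀ r, r ≠ y → γ t s r = γ t t r := by
      intro r hr; by_cases h1 : r = x
      · subst h1; rw [hγx, hγx]
      · by_cases h2 : r = z
        · subst h2; rw [hγz, hγz]
        · by_cases h3 : r = w
          · subst h3; rw [hγw, hγw]
          · rw [hγo _ _ r h1 hr h2 h3, hγo _ _ r h1 hr h2 h3]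
    by_cases h8 : f (γ s s) = f (γ t s)
    · -- then f (γ t s) ≠ f (γ t t), giving y essential on slice z = w
      have h9 : f (γ t s) ≠ f (γ t t) := by rw [← h8]; exact h7
      have hyE : y ∈ ES f z w := by
        refine ⟨γ t s, γ t t, ?_, ?_, hagree2, h9⟩
        · show γ t s z = γ t s w; rw [hγz, hγw]
        · show γ t t z = γ t t w; rw [hγz, hγw]
      rw [hrig z w hzw hzW hwW] at hyE
      exact hyW hyE
    · -- x essential on slice y = z
      have hxE : x ∈ ES f y z := by
        refine ⟨γ s s, γ t s, ?_, ?_, hagree1, h8⟩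
        · show γ s s y = γ s s z; rw [hγy, hγz]
        · show γ t s y = γ t s z; rw [hγy, hγz]
      rw [hrig y z (fun h => hzy (by rw [h])) hyW hzW] at hxE
      exact hxW hxE
  have hglue : ∀ a b : Fin n → A,
      (∃ x y, x ≠ y ∧ x ∉ W ∧ y ∉ W ∧ a x = a y) →
      (∃ x y, x ≠ y ∧ x ∉ W ∧ y ∉ W ∧ b x = b y) →
      (∀ r ∈ W, a r = b r) → f a = f b := by
    rintro a b ⟨x, y, hxy, hxW, hyW, hab⟩ ⟨x', y', hxy', hxW', hyW', hab'⟩ hWab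
    set ca : Fin n → A := fun r => if r ∈ W then a r else v₀ with hca
    set cb : Fin n → A := fun r => if r ∈ W then b r else v₀ with hcb
    have hcacb : ca = cb := by
      funext r
      by_cases h : r ∈ W
      · simp [hca, hcb, h, hWab r h]
      · simp [hca, hcb, h]
    have h1 : f a = f ca := by
      apply DL f hxy hab
      · show ca x = ca y
        simp [hca, hxW, hyW]
      · intro r hr
        rw [hrig x y hxy hxW hyW] at hr
        simp [hca, hr]
      · right; exact hδ x y hxy hxW hyW
    have h2 : f b = f cb := by
      apply DL f hxy' hab'
      · show cb x' = cb y'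
        simp [hcb, hxW', hyW']
      · intro r hr
        rw [hrig x' y' hxy' hxW' hyW'] at hr
        simp [hcb, hr]
      · right; exact hδ x' y' hxy' hxW' hyW'
    rw [h1, h2, hcacb]
  have hcross : ∀ v c w' : Fin n, v ∈ W → c ∉ W → w' ∈ W → w' ≠ v → w' ∈ ES f v c := by
    intro v c w' hv hc hw' hne'
    have hvc : v ≠ c := fun h => hc (by rw [← h]; exact hv)
    obtain ⟨a, b, haD, hbD, hab, hfne⟩ := hw'
    set a₂ : Fin n → A := fun r => if r ∈ W then a r else if r = c then a v else v₀ with ha₂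
    set b₂ : Fin n → A := fun r => if r ∈ W then b r else if r = c then b v else v₀ with hb₂
    obtain ⟨u₁, u₂, hu₁, hu₂, hu⟩ :
        ∃ u₁ u₂, u₁ ∈ Wᶜ \ {c} ∧ u₂ ∈ Wᶜ \ {c} ∧ u₁ ≠ u₂ := by
      have h3 : 3 ≤ (Wᶜ).ncard := by
        have := ncard_compl_add W
        omega
      have h4 := Set.ncard_le_ncard_diff_add_ncard (Wᶜ) {c} (Set.toFinite _)
      have h5 : 1 < ((Wᶜ) \ {c}).ncard := by
        rw [Set.ncard_singleton] at h4
        omega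
      exact (Set.one_lt_ncard_iff (Set.toFinite _)).mp h5
    simp only [Set.mem_diff, Set.mem_compl_iff, Set.mem_singleton_iff] at hu₁ hu₂
    have hfa : f a₂ = f a := by
      apply hglue a₂ a ⟨u₁, u₂, hu, hu₁.1, hu₂.1, ?_⟩ ⟨x₀, y₀, hx₀y₀, hx₀W, hy₀W, haD⟩ ?_
      · simp [ha₂, hu₁.1, hu₁.2, hu₂.1, hu₂.2]
      · intro r hr; simp [ha₂, hr]
    have hfb : f b₂ = f b := by
      apply hglue b₂ b ⟨u₁, u₂, hu, hu₁.1, hu₂.1, ?_⟩ ⟨x₀, y₀, hx₀y₀, hx₀W, hy₀W, hbD⟩ ?_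
      · simp [hb₂, hu₁.1, hu₁.2, hu₂.1, hu₂.2]
      · intro r hr; simp [hb₂, hr]
    refine ⟨a₂, b₂, ?_, ?_, ?_, ?_⟩
    · show a₂ v = a₂ c
      simp [ha₂, hv, hc]
    · show b₂ v = b₂ c
      simp [hb₂, hv, hc]
    · intro r hr
      by_cases h : r ∈ W
      · simp only [ha₂, hb₂, if_pos h]
        exact hab r hr
      · by_cases h2 : r = c
        · simp only [ha₂, hb₂, if_neg h, if_pos h2]
          exact hab v (Ne.symm hne')
        · simp [ha₂, hb₂, h, h2]
    · rw [hfa, hfb]; exact hfne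
  exact ⟨W, hC₀W, hW3, hrig, hglue, hcross⟩

/-- The key contradiction: if every identification minor has at most `n-3` essential
variables but `f` depends on all its variables and `n > |A|`, we get `False`. -/
lemma key [Fintype A] (f : (Fin n → A) → B) (hk : Fintype.card A < n)
    (hdep : ∀ i : Fin n, EssAt f i)
    (hstar0 : ∀ i j : Fin n, i ≠ j → {ℓ : Fin n | EssAt (idMinor f i j) ℓ}.ncard ≤ n - 3) :
    False := by
  classical
  have hn1 : 1 ≤ n := by omega
  have hA2 : 2 ≤ Fintype.card A := by
    by_contra h
    push_neg at h
    haveI hsub : Subsingleton A := Fintype.card_le_one_iff_subsingleton.mp (by omega)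
    obtain ⟨a, b, -, hne⟩ := hdep ⟨0, hn1⟩
    exact hne (congrArg f (Subsingleton.elim a b))
  have hn3 : 3 ≤ n := by omega
  obtain ⟨v₀⟩ : Nonempty A := Fintype.card_pos_iff.mp (by omega)
  have hstar : ∀ i j : Fin n, i ≠ j → (ES f i j).ncard ≤ n - 3 := by
    intro i j hij
    exact le_trans (Set.ncard_le_ncard (ES_subset_minor f) (Set.toFinite _)) (hstar0 i j hij)
  have hstarD : ∀ i j : Fin n, i ≠ j → Dg f i j → (ES f i j).ncard + 1 ≤ n - 3 := by
    intro i j hij hD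
    have h1 : insert j (ES f i j) ⊆ {ℓ : Fin n | EssAt (idMinor f i j) ℓ} := by
      intro r hr
      rcases Set.mem_insert_iff.mp hr with rfl | hr
      · exact Dg_minor f hij hD
      · exact ES_subset_minor f hr
    have h2 : (insert j (ES f i j)).ncard = (ES f i j).ncard + 1 :=
      Set.ncard_insert_of_notMem (notMem_ES_right hij) (Set.toFinite _)
    calc (ES f i j).ncard + 1 = (insert j (ES f i j)).ncard := h2.symm
    _ ≤ {ℓ : Fin n | EssAt (idMinor f i j) ℓ}.ncard := Set.ncard_le_ncard h1 (Set.toFinite _)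
    _ ≤ n - 3 := hstar0 i j hij
  have h01 : (⟨0, by omega⟩ : Fin n) ≠ ⟨1, by omega⟩ := by
    intro h
    simpa using congrArg Fin.val h
  obtain ⟨V, -, hV3, hVrig, hVglue, hVcross⟩ :=
    master f v₀ hn3 hstar hstarD ∅ _ _ h01 (Set.empty_subset _)
  have hVc3 : 3 ≤ (Vᶜ).ncard := by
    have := ncard_compl_add V
    omega
  obtain ⟨m, hm'⟩ : (Vᶜ).Nonempty := Set.nonempty_of_ncard_ne_zero (by omega)
  rw [Set.mem_compl_iff] at hm'
  set canonV : (Fin n → A) → (Fin n → A) := fun a r => if r ∈ V then a r else v₀ with hcanonV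
  have hGC : ∀ a : Fin n → A,
      (∃ x y, x ≠ y ∧ x ∉ V ∧ y ∉ V ∧ a x = a y) → f a = f (canonV a) := by
    intro a hcol
    obtain ⟨u₁, u₂, hu₁, hu₂, hu12⟩ :=
      (Set.one_lt_ncard_iff (Set.toFinite (Vᶜ))).mp (by omega : 1 < (Vᶜ).ncard)
    rw [Set.mem_compl_iff] at hu₁ hu₂
    apply hVglue a (canonV a) hcol ⟨u₁, u₂, hu12, hu₁, hu₂, by simp [hcanonV, hu₁, hu₂]⟩
    intro r hr
    simp [hcanonV, hr]
  obtain ⟨γ, hbad⟩ : ∃ γ : Fin n → A, f γ ≠ f (canonV γ) := by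
    obtain ⟨α, β, hag, hne⟩ := hdep m
    by_cases h1 : f α = f (canonV α)
    · by_cases h2 : f β = f (canonV β)
      · exfalso
        have hc : canonV α = canonV β := by
          funext r
          by_cases hr : r ∈ V
          · have hrm : r ≠ m := fun h => hm' (h ▸ hr)
            simp [hcanonV, hr, hag r hrm]
          · simp [hcanonV, hr]
        exact hne (h1.trans (hc ▸ h2.symm))
      · exact ⟨β, h2⟩
    · exact ⟨α, h1⟩
  have hγcol : ¬ ∃ x y, x ≠ y ∧ x ∉ V ∧ y ∉ V ∧ γ x = γ y := fun h => hbad (hGC γ h)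
  have hM8 : ∀ p q : Fin n, p ≠ q → γ p = γ q →
      ∀ z, z ∉ V → z ≠ p → z ≠ q → z ∈ ES f p q := by
    intro p q hpq hγpq z hzV hzp hzq
    by_contra hzE
    obtain ⟨c', hc'V, hc'z⟩ : ∃ c', c' ∉ V ∧ c' ≠ z := by
      obtain ⟨u₁, u₂, hu₁, hu₂, hu12⟩ :=
        (Set.one_lt_ncard_iff (Set.toFinite (Vᶜ))).mp (by omega : 1 < (Vᶜ).ncard)
      rw [Set.mem_compl_iff] at hu₁ hu₂
      rcases eq_or_ne u₁ z with rfl | h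
      · exact ⟨u₂, hu₂, Ne.symm hu12⟩
      · exact ⟨u₁, hu₁, h⟩
    set b : Fin n → A := Function.update γ z (γ c') with hb
    have h1 : f b = f γ := by
      apply DL f hpq ?_ (show γ p = γ q from hγpq)
      · intro r hr
        rcases eq_or_ne r z with rfl | hrz
        · exact absurd hr hzE
        · rw [hb, Function.update_of_ne hrz]
      · left
        rw [hb, Function.update_of_ne (Ne.symm hzp)]
      · show b p = b q
        rw [hb, Function.update_of_ne (Ne.symm hzp), Function.update_of_ne (Ne.symm hzq)]
        exact hγpq
    have h2 : f b = f (canonV b) := by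
      apply hGC b
      refine ⟨z, c', Ne.symm hc'z, hzV, hc'V, ?_⟩
      rw [hb, Function.update_self, Function.update_of_ne hc'z]
    have h3 : canonV b = canonV γ := by
      funext r
      by_cases hr : r ∈ V
      · have hrz : r ≠ z := fun h => hzV (h ▸ hr)
        simp [hcanonV, hr, hb, Function.update_of_ne hrz]
      · simp [hcanonV, hr]
    exact hbad (h1.symm.trans (h2.trans (by rw [h3])))
  obtain ⟨p, q, hpq, hγpq⟩ : ∃ p q : Fin n, p ≠ q ∧ γ p = γ q := by
    have hcard : Fintype.card A < Fintype.card (Fin n) := by simpa using hk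
    exact Fintype.exists_ne_map_eq_of_card_lt γ hcard
  have hfinal : ∀ x y : Fin n, x ≠ y → (∀ r, r ≠ x → r ≠ y → r ∈ ES f x y) → False := by
    intro x y hxy hsub
    have h1 : (ES f x y)ᶜ ⊆ {x, y} := by
      intro r hr
      rw [Set.mem_compl_iff] at hr
      by_contra hmem
      simp only [Set.mem_insert_iff, Set.mem_singleton_iff, not_or] at hmem
      exact hr (hsub r hmem.1 hmem.2)
    have h2 : ((ES f x y)ᶜ).ncard ≤ 2 :=
      le_trans (Set.ncard_le_ncard h1 (Set.toFinite _)) (pair_ncard_le x y)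
    have h3 := ncard_compl_add (ES f x y)
    have h4 := hstar x y hxy
    omega
  by_cases hpV : p ∈ V
  · by_cases hqV : q ∈ V
    · have hseed : Vᶜ ⊆ ES f p q := by
        intro z hz
        rw [Set.mem_compl_iff] at hz
        exact hM8 p q hpq hγpq z hz (fun h => hz (h ▸ hpV)) (fun h => hz (h ▸ hqV))
      obtain ⟨W, hVcW, hW3, hWrig, hWglue, hWcross⟩ :=
        master f v₀ hn3 hstar hstarD (Vᶜ) p q hpq hseed
      obtain ⟨m₂, hm₂'⟩ : (Wᶜ).Nonempty := by
        have := ncard_compl_add W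
        exact Set.nonempty_of_ncard_ne_zero (by omega)
      rw [Set.mem_compl_iff] at hm₂'
      have hm₂V : m₂ ∈ V := by
        by_contra h
        exact hm₂' (hVcW h)
      have hmW : m ∈ W := hVcW hm'
      have hmm₂ : m₂ ≠ m := fun h => hm₂' (h ▸ hmW)
      apply hfinal m₂ m hmm₂
      intro r hr₂ hrm
      by_cases hrV : r ∈ V
      · exact hVcross m₂ m r hm₂V hm' hrV hr₂
      · have hr : r ∈ ES f m m₂ := hWcross m m₂ r hmW hm₂' (hVcW hrV) hrm
        rw [ES_symm]
        exact hr
    · apply hfinal p q hpq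
      intro r hrp hrq
      by_cases hrV : r ∈ V
      · exact hVcross p q r hpV hqV hrV hrp
      · exact hM8 p q hpq hγpq r hrV hrp hrq
  · by_cases hqV : q ∈ V
    · apply hfinal q p (Ne.symm hpq)
      intro r hrq hrp
      by_cases hrV : r ∈ V
      · exact hVcross q p r hqV hpV hrV hrq
      · have hr : r ∈ ES f p q := hM8 p q hpq hγpq r hrV hrp hrq
        rw [ES_symm]
        exact hr
    · exact hγcol ⟨p, q, hpq, hpV, hqV, hγpq⟩

end WillardAux

theorem stmt11 {A B : Type*} [Fintype A] {n : ℕ} (hn : Fintype.card A < n)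
    (f : (Fin n → A) → B) (hdep : ∀ i : Fin n, EssAt f i) :
    arityGap f ≤ 2 := by
  classical
  by_contra hgap
  push_neg at hgap
  have hessf : essArity f = n := by
    unfold essArity
    have h1 : {i : Fin n | EssAt f i} = Set.univ := Set.eq_univ_of_forall hdep
    rw [h1]
    simp [Set.ncard_univ]
  have hstar0 : ∀ i j : Fin n, i ≠ j →
      {ℓ : Fin n | EssAt (idMinor f i j) ℓ}.ncard ≤ n - 3 := by
    intro i j hij
    have hd : essArity f - essArity (idMinor f i j) ∈
        {d | ∃ i j : Fin n, i ≠ j ∧ EssAt f i ∧ EssAt f j ∧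
          d = essArity f - essArity (idMinor f i j)} :=
      ⟨i, j, hij, hdep i, hdep j, rfl⟩
    have h2 : arityGap f ≤ essArity f - essArity (idMinor f i j) := Nat.sInf_le hd
    have h3 : essArity (idMinor f i j) =
        {ℓ : Fin n | EssAt (idMinor f i j) ℓ}.ncard := rfl
    have h4 := WillardAux.ncard_le_n {ℓ : Fin n | EssAt (idMinor f i j) ℓ}
    omega
  exact WillardAux.key f hn hdep hstar0
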